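/- Let (u*, v*) with u*, v* > 0 satisfy Λ = λu*φ(v*) + μu* and σ = λu*φ(v*)/v*, where φ satisfies 0 < v·φ'(v) ≤ φ(v) for v > 0, and let d₁, d₂ > 0 and κ ≥ 0. Set H₀ = -d₁λu*φ'(v*) + d₁σ + d₂λφ(v*) + d₂μ. Then H₀ ≥ d₂Λ/u* > 0, and the matrix J_κ = [[-d₁κ - λφ(v*) - μ, -λu*φ'(v*)], [λφ(v*), -d₂κ + λu*φ'(v*) - σ]] satisfies tr J_κ < 0 and det J_κ = d₁d₂κ² + H₀κ + (λσφ(v*) + μσ - μλu*φ'(v*)) > 0. -/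

import Mathlib

/-- At a positive endemic equilibrium, for any diffusion coefficients `d₁, d₂ > 0` and any
eigenmode `κ ≥ 0`, the quantity `H₀ = -d₁λu*φ'(v*) + d₁σ + d₂λφ(v*) + d₂μ` satisfies
`H₀ ≥ d₂Λ/u* > 0`, and the linearization matrix `J_κ` has negative trace and determinant
`d₁d₂κ² + H₀κ + (λσφ(v*) + μσ - μλu*φ'(v*)) > 0`. -/
theorem stmt_12 (φ : ℝ → ℝ) (Λ μ σ lam ustar vstar d₁ d₂ κ : ℝ)
    (hΛ : 0 < Λ) (hμ : 0 < μ) (hσ : 0 < σ) (hlam : 0 < lam)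
    (hu : 0 < ustar) (hv : 0 < vstar)
    (hd₁ : 0 < d₁) (hd₂ : 0 < d₂) (hκ : 0 ≤ κ)
    (hdiff : ∀ v ∈ Set.Ioi (0:ℝ), DifferentiableAt ℝ φ v)
    (hinc : ∀ v : ℝ, 0 < v → 0 < v * deriv φ v ∧ v * deriv φ v ≤ φ v)
    (heq1 : Λ = lam * ustar * φ vstar + μ * ustar)
    (heq2 : σ = lam * ustar * φ vstar / vstar) :
    d₂ * Λ / ustar ≤ -(d₁ * lam * ustar * deriv φ vstar) + d₁ * σ + d₂ * (lam * φ vstar) + d₂ * μ ∧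
    0 < d₂ * Λ / ustar ∧
    Matrix.trace !![-(d₁ * κ) - lam * φ vstar - μ, -(lam * ustar * deriv φ vstar);
        lam * φ vstar, -(d₂ * κ) + lam * ustar * deriv φ vstar - σ] < 0 ∧
    Matrix.det !![-(d₁ * κ) - lam * φ vstar - μ, -(lam * ustar * deriv φ vstar);
        lam * φ vstar, -(d₂ * κ) + lam * ustar * deriv φ vstar - σ]
      = d₁ * d₂ * κ ^ 2
        + (-(d₁ * lam * ustar * deriv φ vstar) + d₁ * σ + d₂ * (lam * φ vstar) + d₂ * μ) * κ
        + (lam * σ * φ vstar + μ * σ - μ * lam * ustar * deriv φ vstar) ∧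
    0 < Matrix.det !![-(d₁ * κ) - lam * φ vstar - μ, -(lam * ustar * deriv φ vstar);
        lam * φ vstar, -(d₂ * κ) + lam * ustar * deriv φ vstar - σ] := by
  obtain ⟨hd0, hdle⟩ := hinc vstar hv
  have hp : 0 < φ vstar := lt_of_lt_of_le hd0 hdle
  have hσv : σ * vstar = lam * ustar * φ vstar := by
    field_simp at heq2; linarith [heq2]
  have hder : 0 < deriv φ vstar := by by_contra h; push_neg at h; nlinarith
  have hkey : lam * ustar * deriv φ vstar ≤ σ := by
    have h1 : lam * ustar * (vstar * deriv φ vstar) ≤ lam * ustar * φ vstar := by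
      apply mul_le_mul_of_nonneg_left hdle (by positivity)
    nlinarith [hσv]
  have hΛu : Λ / ustar = lam * φ vstar + μ := by
    field_simp [heq1]; rw [heq1]; ring
  refine ⟨?_, ?_, ?_, ?_, ?_⟩
  · have : d₂ * Λ / ustar = d₂ * (lam * φ vstar + μ) := by
      rw [mul_div_assoc, hΛu]
    rw [this]
    nlinarith [mul_le_mul_of_nonneg_left hkey hd₁.le]
  · positivity
  · rw [Matrix.trace_fin_two_of]
    nlinarith [mul_nonneg hd₁.le hκ, mul_nonneg hd₂.le hκ]
  · rw [Matrix.det_fin_two_of]; ring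
  · rw [Matrix.det_fin_two_of]
    have h1 : 0 ≤ σ - lam * ustar * deriv φ vstar := by linarith
    have h2 : 0 < lam * φ vstar * (lam * ustar * deriv φ vstar) := by positivity
    nlinarith [mul_nonneg (mul_nonneg hd₁.le hd₂.le) (mul_nonneg hκ hκ),
      mul_nonneg (mul_nonneg hd₁.le hκ) h1,
      mul_nonneg (mul_nonneg hd₂.le hκ) (by positivity : (0:ℝ) ≤ lam * φ vstar + μ),
      mul_nonneg (by positivity : (0:ℝ) ≤ lam * φ vstar + μ) h1]
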